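/- Let $r \in \{1,\dots,n\}$ and let $h(p) = \frac{p^r}{1 - \sum_{l \ne r} p^l}$ on $\Delta_n$ (this corresponds to $p^r/(p^0+p^r)$ with $p^0 = 1 - \sum_l p^l$). Then $\sum_{i,j=1}^n p^i(\delta^i_j - p^j)\, \partial_{p^i}\partial_{p^j} h(p) = 0$ on $\Delta_n$. -/

import Mathlib

open scoped BigOperators

noncomputable section

/-- The open standard orthogonal simplex in ℝⁿ. -/
def stdSimplexO (n : ℕ) : Set (Fin n → ℝ) :=
  {p | (∀ i, 0 < p i) ∧ ∑ i, p i < 1}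

/-- The closed standard orthogonal simplex in ℝⁿ. -/
def stdSimplexC (n : ℕ) : Set (Fin n → ℝ) :=
  {p | (∀ i, 0 ≤ p i) ∧ ∑ i, p i ≤ 1}

/-- First partial derivative in coordinate direction `i`. -/
def pd {n : ℕ} (u : (Fin n → ℝ) → ℝ) (i : Fin n) (p : Fin n → ℝ) : ℝ :=
  fderiv ℝ u p (Pi.single i 1)

/-- Second partial derivative `∂_j ∂_i`. -/
def pd2 {n : ℕ} (u : (Fin n → ℝ) → ℝ) (i j : Fin n) (p : Fin n → ℝ) : ℝ :=
  pd (pd u i) j p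

/-- Kronecker delta. -/
def kdelta {n : ℕ} (i j : Fin n) : ℝ := if i = j then 1 else 0

/-- Kolmogorov backward (Wright–Fisher) operator `L_n^*`. -/
def Lb {n : ℕ} (u : (Fin n → ℝ) → ℝ) (p : Fin n → ℝ) : ℝ :=
  (1/2) * ∑ i, ∑ j, p i * (kdelta i j - p j) * pd2 u i j p

/-- Kolmogorov forward (Wright–Fisher) operator `L_n`. -/
def Lf {n : ℕ} (u : (Fin n → ℝ) → ℝ) (p : Fin n → ℝ) : ℝ :=
  (1/2) * ∑ i, ∑ j, pd2 (fun q => q i * (kdelta i j - q j) * u q) i j p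

namespace Stmt3Aux

variable {n : ℕ}

def Dr (r : Fin n) (q : Fin n → ℝ) : ℝ := 1 - ∑ l ∈ Finset.univ.erase r, q l

def LD (r : Fin n) : (Fin n → ℝ) →L[ℝ] ℝ :=
  -(∑ l ∈ Finset.univ.erase r, ContinuousLinearMap.proj (R := ℝ) (φ := fun _ : Fin n => ℝ) l)

lemma hasFDerivAt_Dr (r : Fin n) (q : Fin n → ℝ) :
    HasFDerivAt (Dr r) (LD r) q := by
  have h : HasFDerivAt (fun q : Fin n → ℝ => ∑ l ∈ Finset.univ.erase r, q l)
      (∑ l ∈ Finset.univ.erase r, ContinuousLinearMap.proj (R := ℝ) (φ := fun _ : Fin n => ℝ) l) q := by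
    have := (∑ l ∈ Finset.univ.erase r,
        ContinuousLinearMap.proj (R := ℝ) (φ := fun _ : Fin n => ℝ) l).hasFDerivAt (x := q)
    have hfun : (fun q : Fin n → ℝ => ∑ l ∈ Finset.univ.erase r, q l)
        = ⇑(∑ l ∈ Finset.univ.erase r,
            ContinuousLinearMap.proj (R := ℝ) (φ := fun _ : Fin n => ℝ) l) := by
      ext q
      simp [ContinuousLinearMap.coe_sum', Finset.sum_apply]
    rw [hfun]
    exact this
  have := (hasFDerivAt_const (1:ℝ) q).sub h
  simp only [zero_sub] at this; exact this

lemma LD_apply (r i : Fin n) : LD r (Pi.single i 1) = if i = r then 0 else -1 := by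
  simp only [LD, ContinuousLinearMap.neg_apply, ContinuousLinearMap.sum_apply,
    ContinuousLinearMap.proj_apply, Pi.single_apply]
  rw [Finset.sum_ite_eq' (Finset.univ.erase r) i fun _ => (1:ℝ)]
  by_cases h : i = r <;> simp [h]

def F (r i : Fin n) (q : Fin n → ℝ) : ℝ :=
  if i = r then (Dr r q)⁻¹ else q r * ((Dr r q)^2)⁻¹

def av (r i : Fin n) : ℝ := if i = r then 1 else 0
def bv (r i : Fin n) : ℝ := if i = r then 0 else 1

lemma pd_h (r : Fin n) (q : Fin n → ℝ) (hq : Dr r q ≠ 0) (i : Fin n) :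
    pd (fun q => q r / Dr r q) i q = F r i q := by
  have h1 : HasFDerivAt (fun q : Fin n → ℝ => q r)
      (ContinuousLinearMap.proj (R := ℝ) (φ := fun _ : Fin n => ℝ) r) q :=
    (ContinuousLinearMap.proj (R := ℝ) (φ := fun _ : Fin n => ℝ) r).hasFDerivAt
  have h2 : HasFDerivAt (fun q : Fin n → ℝ => (Dr r q)⁻¹) ((-(Dr r q ^ 2)⁻¹) • LD r) q :=
    (hasDerivAt_inv hq).comp_hasFDerivAt q (hasFDerivAt_Dr r q)
  have h3 := h1.mul h2
  have h4 : HasFDerivAt (fun q : Fin n → ℝ => q r / Dr r q)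
      (q r • (-(Dr r q ^ 2)⁻¹ • LD r) +
        (Dr r q)⁻¹ • ContinuousLinearMap.proj (R := ℝ) (φ := fun _ : Fin n => ℝ) r) q := by
    simpa [div_eq_mul_inv, Pi.mul_def] using h3
  rw [pd, h4.fderiv]
  simp only [ContinuousLinearMap.add_apply, ContinuousLinearMap.smul_apply,
    ContinuousLinearMap.neg_apply, ContinuousLinearMap.proj_apply, LD_apply,
    Pi.single_apply, smul_eq_mul, F]
  by_cases h : i = r
  · simp [h]
  · have h' : r ≠ i := fun e => h e.symm
    simp [h, h']

lemma pd_F (r : Fin n) (q : Fin n → ℝ) (hq : Dr r q ≠ 0) (i j : Fin n) :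
    pd (F r i) j q = (av r i * bv r j + bv r i * av r j) * ((Dr r q)^2)⁻¹
      + 2 * q r * (bv r i * bv r j) * ((Dr r q)^3)⁻¹ := by
  by_cases h : i = r
  · have h2 : HasFDerivAt (fun q : Fin n → ℝ => (Dr r q)⁻¹) ((-(Dr r q ^ 2)⁻¹) • LD r) q :=
      (hasDerivAt_inv hq).comp_hasFDerivAt q (hasFDerivAt_Dr r q)
    have hF : F r i = fun q : Fin n → ℝ => (Dr r q)⁻¹ := by
      funext x; simp [F, h]
    rw [pd, hF, h2.fderiv]
    simp only [ContinuousLinearMap.smul_apply, LD_apply, smul_eq_mul, av, bv, h]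
    by_cases hj : j = r <;> simp [hj]
  · have hd2 : HasDerivAt (fun y : ℝ => (y^2)⁻¹) (-(2 * Dr r q ^ 1) / (Dr r q ^ 2) ^ 2) (Dr r q) :=
      (hasDerivAt_pow 2 (Dr r q)).inv (pow_ne_zero 2 hq)
    have h2 : HasFDerivAt (fun q : Fin n → ℝ => ((Dr r q)^2)⁻¹)
        ((-(2 * Dr r q ^ 1) / (Dr r q ^ 2) ^ 2) • LD r) q := by
      have := hd2.comp_hasFDerivAt q (hasFDerivAt_Dr r q)
      simpa [Function.comp_def] using this
    have h1 : HasFDerivAt (fun q : Fin n → ℝ => q r)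
        (ContinuousLinearMap.proj (R := ℝ) (φ := fun _ : Fin n => ℝ) r) q :=
      (ContinuousLinearMap.proj (R := ℝ) (φ := fun _ : Fin n => ℝ) r).hasFDerivAt
    have h3 := h1.mul h2
    have hF : F r i = fun q : Fin n → ℝ => q r * ((Dr r q)^2)⁻¹ := by
      funext x; simp [F, h]
    rw [pd, hF, HasFDerivAt.fderiv (f := fun q : Fin n → ℝ => q r * ((Dr r q)^2)⁻¹) h3]
    simp only [ContinuousLinearMap.add_apply, ContinuousLinearMap.smul_apply, LD_apply,
      ContinuousLinearMap.proj_apply, Pi.single_apply, smul_eq_mul, av, bv, h]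
    by_cases hj : j = r
    · simp [hj]
    · have h' : r ≠ j := fun e => hj e.symm
      simp only [hj, h', if_false, if_true]
      field_simp
      ring

lemma bil (p u v : Fin n → ℝ) :
    ∑ i, ∑ j, p i * (kdelta i j - p j) * (u i * v j)
      = ∑ i, p i * u i * v i - (∑ i, p i * u i) * (∑ j, p j * v j) := by
  have key : ∀ i : Fin n, ∑ j, p i * (kdelta i j - p j) * (u i * v j)
      = p i * u i * v i - (p i * u i) * ∑ j, p j * v j := by
    intro i
    have : ∀ j : Fin n, p i * (kdelta i j - p j) * (u i * v j)
        = (if i = j then p i * u i * v j else 0) - (p i * u i) * (p j * v j) := by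
      intro j
      unfold kdelta
      by_cases h : i = j <;> simp [h] <;> ring
    rw [Finset.sum_congr rfl fun j _ => this j, Finset.sum_sub_distrib,
      Finset.sum_ite_eq Finset.univ i fun j => p i * u i * v j, ← Finset.mul_sum]
    simp
  rw [Finset.sum_congr rfl fun i _ => key i, Finset.sum_sub_distrib, ← Finset.sum_mul]

lemma pd2_h (r : Fin n) (p : Fin n → ℝ) (hd : Dr r p ≠ 0) (i j : Fin n) :
    pd2 (fun q => q r / Dr r q) i j p
      = (av r i * bv r j + bv r i * av r j) * ((Dr r p)^2)⁻¹
        + 2 * p r * (bv r i * bv r j) * ((Dr r p)^3)⁻¹ := by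
  have hcont : Continuous (Dr r) :=
    continuous_const.sub (continuous_finset_sum _ fun l _ => continuous_apply l)
  have hev : ∀ᶠ q in nhds p, Dr r q ≠ 0 := hcont.continuousAt.eventually_ne hd
  have heq : pd (fun q => q r / Dr r q) i =ᶠ[nhds p] F r i :=
    hev.mono fun q hq' => pd_h r q hq' i
  have : pd2 (fun q => q r / Dr r q) i j p = pd (F r i) j p := by
    unfold pd at heq
    unfold pd2 pd
    rw [heq.fderiv_eq]
  rw [this, pd_F r p hd i j]

end Stmt3Aux

theorem stmt3 (n : ℕ) (r : Fin n) :
    ∀ p ∈ stdSimplexO n,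
      ∑ i, ∑ j, p i * (kdelta i j - p j) *
        pd2 (fun q => q r / (1 - ∑ l ∈ Finset.univ.erase r, q l)) i j p = 0 := by
  open Stmt3Aux in
  intro p hp
  obtain ⟨hpos, hsum⟩ := hp
  have hs : ∑ l ∈ Finset.univ.erase r, p l = (∑ i, p i) - p r := by
    rw [← Finset.sum_erase_add Finset.univ p (Finset.mem_univ r)]
    ring
  have hd : Dr r p ≠ 0 := by
    have := hpos r
    unfold Dr
    rw [hs]
    intro h
    linarith
  have hrw : ∀ i j : Fin n,
      pd2 (fun q => q r / (1 - ∑ l ∈ Finset.univ.erase r, q l)) i j p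
        = (av r i * bv r j + bv r i * av r j) * ((Dr r p)^2)⁻¹
          + 2 * p r * (bv r i * bv r j) * ((Dr r p)^3)⁻¹ := fun i j =>
    pd2_h r p hd i j
  rw [Finset.sum_congr rfl fun i _ => Finset.sum_congr rfl fun j _ => by rw [hrw i j]]
  have expand : ∀ i j : Fin n,
      p i * (kdelta i j - p j) *
          ((av r i * bv r j + bv r i * av r j) * ((Dr r p)^2)⁻¹
            + 2 * p r * (bv r i * bv r j) * ((Dr r p)^3)⁻¹)
        = ((Dr r p)^2)⁻¹ * (p i * (kdelta i j - p j) * (av r i * bv r j))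
          + ((Dr r p)^2)⁻¹ * (p i * (kdelta i j - p j) * (bv r i * av r j))
          + (2 * p r * ((Dr r p)^3)⁻¹) * (p i * (kdelta i j - p j) * (bv r i * bv r j)) := by
    intro i j; ring
  rw [Finset.sum_congr rfl fun i _ => Finset.sum_congr rfl fun j _ => expand i j]
  simp only [Finset.sum_add_distrib, ← Finset.mul_sum]
  rw [bil p (av r) (bv r), bil p (bv r) (av r), bil p (bv r) (bv r)]
  have hab : ∀ i : Fin n, av r i * bv r i = 0 := by
    intro i; unfold av bv; by_cases h : i = r <;> simp [h]
  have h1 : ∑ i, p i * av r i * bv r i = 0 := by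
    apply Finset.sum_eq_zero; intro i _
    rw [mul_assoc, hab i, mul_zero]
  have h1' : ∑ i, p i * bv r i * av r i = 0 := by
    apply Finset.sum_eq_zero; intro i _
    have : bv r i * av r i = 0 := by rw [mul_comm]; exact hab i
    rw [mul_assoc, this, mul_zero]
  have h2 : ∑ i, p i * av r i = p r := by
    unfold av
    simp [mul_ite, Finset.sum_ite_eq']
  have h3 : ∑ i, p i * bv r i = (∑ i, p i) - p r := by
    have : ∀ i : Fin n, p i * bv r i = p i - p i * av r i := by
      intro i; unfold av bv; by_cases h : i = r <;> simp [h]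
    rw [Finset.sum_congr rfl fun i _ => this i, Finset.sum_sub_distrib, h2]
  have h4 : ∑ i, p i * bv r i * bv r i = (∑ i, p i) - p r := by
    have : ∀ i : Fin n, p i * bv r i * bv r i = p i * bv r i := by
      intro i; unfold bv; by_cases h : i = r <;> simp [h]
    rw [Finset.sum_congr rfl fun i _ => this i, h3]
  rw [h1, h1', h2, h3, h4]
  have hDr : Dr r p = 1 - ((∑ i, p i) - p r) := by rw [Dr, hs]
  rw [hDr]
  set S := ∑ i, p i
  have hne : 1 - (S - p r) ≠ 0 := by rw [hDr] at hd; exact hd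
  field_simp
  ring
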